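/- For every n ≥ 2, every t ∈ [0, 2π), all M₁, M₂ ∈ L_n and all k, l in {1, ..., n}, one has ⟨φ_k^t, (M₁ ⊗ M₂) φ_k^t⟩ = ⟨φ_l^t, (M₁ ⊗ M₂) φ_l^t⟩. -/

import Mathlib

open Matrix

/-- η = exp(iπ/4). -/
noncomputable def eta : ℂ := Complex.exp (Real.pi / 4 * Complex.I)

/-- U = diag(η, conj η) ∈ M₂(ℂ). -/
noncomputable def U : Matrix (Fin 2) (Fin 2) ℂ := !![eta, 0; 0, star eta]

/-- L_n ⊂ M_{2n}(ℂ): n×n block matrices (ℂ^{2n} being identified with n copies of ℂ²)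
whose diagonal 2×2 blocks all equal a common A ∈ M₂(ℂ), whose (i,j) block is
λ_{ij}U* for i < j and λ_{ij}U for i > j. -/
noncomputable def Ln (n : ℕ) : Set (Matrix (Fin n × Fin 2) (Fin n × Fin 2) ℂ) :=
  {M | ∃ (A : Matrix (Fin 2) (Fin 2) ℂ) (lam : Fin n → Fin n → ℂ),
    ∀ (i j : Fin n) (a b : Fin 2),
      M (i, a) (j, b) =
        if i = j then A a b
        else if (i : ℕ) < (j : ℕ) then lam i j * Uᴴ a b
        else lam i j * U a b}

open Kronecker Real

/-- φ_k^t = (|2k−1⟩⊗|2k−1⟩ + e^{it}|2k⟩⊗|2k⟩)/√2 ∈ ℂ^{2n} ⊗ ℂ^{2n}, where |2k−1⟩ = (k,0)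
and |2k⟩ = (k,1) in the identification of ℂ^{2n} with n copies of ℂ². -/
noncomputable def phiK (n : ℕ) (t : ℝ) (k : Fin n) :
    (Fin n × Fin 2) × (Fin n × Fin 2) → ℂ := fun p =>
  ((if p = ((k, 0), (k, 0)) then 1 else 0) +
    Complex.exp (t * Complex.I) * (if p = ((k, 1), (k, 1)) then 1 else 0)) / Real.sqrt 2

/-- For every n ≥ 2, t ∈ [0, 2π), M₁, M₂ ∈ L_n and all k, l,
⟨φ_k^t, (M₁ ⊗ M₂)φ_k^t⟩ = ⟨φ_l^t, (M₁ ⊗ M₂)φ_l^t⟩. -/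
theorem phiK_inner_kron_independent_of_k (n : ℕ) (hn : 2 ≤ n) (t : ℝ)
    (ht : t ∈ Set.Ico 0 (2 * π))
    (M₁ M₂ : Matrix (Fin n × Fin 2) (Fin n × Fin 2) ℂ)
    (hM₁ : M₁ ∈ Ln n) (hM₂ : M₂ ∈ Ln n) (k l : Fin n) :
    star (phiK n t k) ⬝ᵥ (M₁ ⊗ₖ M₂).mulVec (phiK n t k) =
      star (phiK n t l) ⬝ᵥ (M₁ ⊗ₖ M₂).mulVec (phiK n t l) := by
  obtain ⟨A₁, lam₁, h₁⟩ := hM₁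
  obtain ⟨A₂, lam₂, h₂⟩ := hM₂
  have hrepr : ∀ k : Fin n, phiK n t k =
      ((Real.sqrt 2 : ℂ))⁻¹ • ((Pi.single ((k, (0 : Fin 2)), (k, (0 : Fin 2))) (1 : ℂ) :
          (Fin n × Fin 2) × (Fin n × Fin 2) → ℂ) +
        Complex.exp (t * Complex.I) • (Pi.single ((k, (1 : Fin 2)), (k, (1 : Fin 2))) (1 : ℂ) :
          (Fin n × Fin 2) × (Fin n × Fin 2) → ℂ)) := by
    intro k
    funext p
    simp only [phiK, Pi.smul_apply, Pi.add_apply, Pi.single_apply, smul_eq_mul]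
    ring
  have hstar1 : ∀ (p : (Fin n × Fin 2) × (Fin n × Fin 2)),
      star (Pi.single p (1 : ℂ) : (Fin n × Fin 2) × (Fin n × Fin 2) → ℂ) = Pi.single p (1 : ℂ) := by
    intro p
    funext q
    simp [Pi.single_apply, apply_ite (star : ℂ → ℂ)]
  rw [hrepr k, hrepr l]
  simp only [star_smul, star_add, smul_dotProduct, dotProduct_smul, Matrix.mulVec_add,
    Matrix.mulVec_smul, add_dotProduct, dotProduct_add, hstar1, Matrix.mulVec_single,
    single_dotProduct, smul_eq_mul, mul_one, Pi.smul_apply, Matrix.kroneckerMap_apply,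
    h₁, h₂, if_pos rfl, if_true, Matrix.col_apply, one_mul, MulOpposite.op_one, one_smul]
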